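/- Let U be a finite group, B a finite group containing representatives, and G ⊇ U a finite group with a subgroup B and element n₀ such that the map u ↦ un₀B is injective on U. Let k be a field and let Σ be a set of pairwise distinct homomorphisms σ: U → k^×. Then the elements {𝔲_σn₀𝔟 : σ ∈ Σ} are linearly independent in kG𝔟, where 𝔲_σ = ∑_{u∈U}σ(u)u and 𝔟 = ∑_{b∈B}b. Hence the submodule they generate has dimension at least |Σ|. -/

import Mathlib

open MonoidAlgebra

/-- The element `𝔟 = ∑_{b ∈ B} b` of the group algebra `kG`. -/
noncomputable def bSum (k : Type*) {G : Type*} [Field k] [Group G] (B : Subgroup G) [Fintype B] :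
    MonoidAlgebra k G :=
  ∑ b : B, of k G (b : G)

/-- The element `𝔲_σ = ∑_{u ∈ U} σ(u)·u` of the group algebra `kG`. -/
noncomputable def uSigma (k : Type*) {G : Type*} [Field k] [Group G] (U : Subgroup G)
    [Fintype U] (σ : U →* kˣ) : MonoidAlgebra k G :=
  ∑ u : U, ((σ u : kˣ) : k) • of k G (u : G)

/-- If `u ↦ un₀B` is injective on `U`, then for any set `Σ` of homomorphisms `U → k^×` the
elements `𝔲_σn₀𝔟` (`σ ∈ Σ`) are linearly independent in `kG𝔟`; hence the submodule they
generate has dimension at least `|Σ|`. -/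
theorem uSigma_n0_b_linearIndependent {k G : Type*} [Field k] [Group G] [Fintype G]
    (U B : Subgroup G) [Fintype U] [Fintype B] (n₀ : G)
    (hinj : ∀ u u' : U, (((u : G) * n₀ : G) : G ⧸ B) = (((u' : G) * n₀ : G) : G ⧸ B) → u = u')
    (chars : Set (U →* kˣ)) :
    LinearIndependent k (fun σ : chars => uSigma k U (σ : U →* kˣ) * of k G n₀ * bSum k B) ∧
      Nat.card chars ≤ Module.finrank k ↥(Submodule.span (MonoidAlgebra k G)
        (Set.range fun σ : chars => uSigma k U (σ : U →* kˣ) * of k G n₀ * bSum k B)) := by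
  -- key: u*n₀*b = u₀*n₀ ↔ u = u₀ ∧ b = 1
  have key : ∀ (u u₀ : U) (b : B), ((u : G) * n₀ * (b : G) = (u₀ : G) * n₀) ↔ (u = u₀ ∧ b = 1) := by
    intro u u₀ b
    constructor
    · intro h
      have hq : (((u : G) * n₀ : G) : G ⧸ B) = (((u₀ : G) * n₀ : G) : G ⧸ B) := by
        rw [QuotientGroup.eq]
        have : ((u:G) * n₀)⁻¹ * ((u₀:G) * n₀) = (b:G) := by
          rw [← h]; group
        rw [this]; exact b.2
      have hu := hinj u u₀ hq
      subst hu
      refine ⟨rfl, ?_⟩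
      have : (b : G) = 1 := by
        have h' : (u:G) * n₀ * (b:G) = (u:G) * n₀ * 1 := by rw [mul_one]; exact h
        exact mul_left_cancel h'
      exact Subtype.ext this
    · rintro ⟨rfl, rfl⟩; simp
  -- expand the element
  have he : ∀ σ : U →* kˣ, uSigma k U σ * of k G n₀ * bSum k B =
      ∑ u : U, ∑ b : B, ((σ u : kˣ) : k) • MonoidAlgebra.single ((u : G) * n₀ * (b : G)) (1 : k) := by
    intro σ
    unfold uSigma bSum
    rw [Finset.sum_mul, Finset.sum_mul]
    refine Finset.sum_congr rfl fun u _ => ?_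
    rw [smul_mul_assoc, smul_mul_assoc, Finset.mul_sum, Finset.smul_sum]
    refine Finset.sum_congr rfl fun b _ => ?_
    simp [MonoidAlgebra.of_apply, MonoidAlgebra.single_mul_single]
  -- linear map evaluating coefficients
  let Φ : MonoidAlgebra k G →ₗ[k] (U → k) :=
    { toFun := fun x u => x.coeff ((u : G) * n₀)
      map_add' := fun x y => by funext u; exact Finsupp.add_apply x.coeff y.coeff _
      map_smul' := fun c x => by funext u; rw [RingHom.id_apply]; exact Finsupp.smul_apply (b := c) (v := x.coeff) (a := (↑u * n₀)) }
  have hΦ : ∀ σ : U →* kˣ, Φ (uSigma k U σ * of k G n₀ * bSum k B) = fun u : U => ((σ u : kˣ) : k) := by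
    intro σ
    funext u₀
    show (uSigma k U σ * of k G n₀ * bSum k B).coeff ((u₀ : G) * n₀) = _
    rw [he σ]
    rw [MonoidAlgebra.coeff_sum]
    rw [Finsupp.finset_sum_apply _ (fun u => (∑ b : B, ((σ u : kˣ) : k) • MonoidAlgebra.single ((u : G) * n₀ * (b : G)) (1 : k)).coeff)]
    simp only [MonoidAlgebra.coeff_sum, Finsupp.finset_sum_apply, Finsupp.smul_apply, Finsupp.single_apply, key,
      smul_eq_mul, mul_ite, mul_one, mul_zero, ite_and]
    classical
    have h2 : ∀ (u : U) (b : B), (((σ u : kˣ) : k) • MonoidAlgebra.single ((u:G) * n₀ * (b:G)) (1:k)).coeff ((u₀:G) * n₀)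
        = if u = u₀ ∧ b = 1 then ((σ u : kˣ) : k) else 0 := by
      intro u b
      rw [MonoidAlgebra.coeff_smul, Finsupp.smul_apply (b := ((σ u : kˣ) : k)) (v := (MonoidAlgebra.single ((u:G) * n₀ * (b:G)) (1:k)).coeff) (a := ((u₀:G) * n₀)),
        MonoidAlgebra.coeff_single, Finsupp.single_apply]
      simp only [key, smul_eq_mul, mul_ite, mul_one, mul_zero]
    simp only [MonoidAlgebra.coeff_sum, Finset.sum_apply', h2, ite_and]
    rw [Finset.sum_comm]
    simp
  -- Dedekind
  have hded : LinearIndependent k (fun σ : chars => (fun u : U => ((σ.1 u : kˣ) : k))) := by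
    have h1 := linearIndependent_monoidHom U k
    have := h1.comp (fun σ : chars => (Units.coeHom k).comp σ.1)
      (fun σ τ h => by
        apply Subtype.ext
        ext u
        have := DFunLike.congr_fun h u
        simpa using this)
    exact this
  have hli : LinearIndependent k (fun σ : chars => uSigma k U (σ : U →* kˣ) * of k G n₀ * bSum k B) := by
    apply LinearIndependent.of_comp Φ
    convert hded using 1
    funext σ
    exact hΦ σ.1
  refine ⟨hli, ?_⟩
  -- cardinality bound
  set f := fun σ : chars => uSigma k U (σ : U →* kˣ) * of k G n₀ * bSum k B with hf
  set p := Submodule.span (MonoidAlgebra k G) (Set.range f) with hp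
  have hmem : ∀ σ : chars, f σ ∈ p := fun σ => Submodule.subset_span ⟨σ, rfl⟩
  have hli' : LinearIndependent k (fun σ : chars => (⟨f σ, hmem σ⟩ : p)) := by
    apply LinearIndependent.of_comp (p.subtype.restrictScalars k)
    exact hli
  have := hli'.cardinal_le_rank
  haveI hfin : Module.Finite k (MonoidAlgebra k G) := inferInstance
  haveI : Module.Finite k ↥p := Module.Finite.of_injective (p.subtype.restrictScalars k) Subtype.val_injective
  have hrank := hli'.cardinal_le_rank
  have hlt : Module.rank k ↥p < Cardinal.aleph0 := Module.rank_lt_aleph0 k ↥p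
  have := Cardinal.toNat_le_toNat hrank hlt
  simpa [Nat.card, Module.finrank] using this
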